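/- Let a, b, σ ∈ (0,∞) and x ∈ [0,∞). For μ ∈ (0,∞) set D(μ) := √(b² + 4σμ), E(μ) := (D(μ) − b)·e^{−D(μ)} + D(μ) + b, ψ̃(μ) := 2μ·(1 − e^{−D(μ)})/E(μ), and φ̃(μ) := −(1/σ)·( (b − D(μ))/2 + log 2 + log( D(μ)/E(μ) ) ). Then the integral ∫₀^∞ e^{−a·φ̃(μ)}·e^{−x·ψ̃(μ)} dμ is finite. -/

import Mathlib

open MeasureTheory Real

/-- exp(-c√μ) is integrable on (0,∞) for c > 0. -/
lemma integrableOn_exp_neg_mul_sqrt {c : ℝ} (hc : 0 < c) :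
    IntegrableOn (fun μ : ℝ => Real.exp (-c * Real.sqrt μ)) (Set.Ioi 0) := by
  have h01 : IntegrableOn (fun μ : ℝ => Real.exp (-c * Real.sqrt μ)) (Set.Ioc 0 1) := by
    refine ((Continuous.continuousOn ?_).integrableOn_Icc (a := 0) (b := 1)).mono_set
      Set.Ioc_subset_Icc_self
    continuity
  have h1i : IntegrableOn (fun μ : ℝ => Real.exp (-c * Real.sqrt μ)) (Set.Ioi 1) := by
    have hint : IntegrableOn (fun μ : ℝ => (256 / c ^ 4) * μ ^ (-2 : ℝ)) (Set.Ioi 1) :=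
      (integrableOn_Ioi_rpow_of_lt (by norm_num) one_pos).const_mul _
    refine Integrable.mono' hint ?_ ?_
    · exact ((continuous_exp.comp ((continuous_const.mul continuous_sqrt))).aestronglyMeasurable)
    · filter_upwards [ae_restrict_mem measurableSet_Ioi] with μ hμ
      have hμ1 : (1 : ℝ) < μ := hμ
      have hμ0 : (0 : ℝ) < μ := lt_trans one_pos hμ1
      have hs : 0 < Real.sqrt μ := Real.sqrt_pos.mpr hμ0
      rw [Real.norm_eq_abs, abs_of_pos (Real.exp_pos _)]
      -- exp(c√μ) ≥ (1 + c√μ/4)^4 ≥ (c√μ/4)^4 = c⁴μ²/256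
      have key : c ^ 4 * μ ^ 2 / 256 ≤ Real.exp (c * Real.sqrt μ) := by
        have h1 : Real.exp (c * Real.sqrt μ) = (Real.exp (c * Real.sqrt μ / 4)) ^ 4 := by
          rw [← Real.exp_nat_mul]; ring_nf
        have h2 : c * Real.sqrt μ / 4 ≤ Real.exp (c * Real.sqrt μ / 4) :=
          le_trans (by linarith [Real.add_one_le_exp (c * Real.sqrt μ / 4)]) le_rfl
        have h3 : (c * Real.sqrt μ / 4) ^ 4 ≤ (Real.exp (c * Real.sqrt μ / 4)) ^ 4 := by
          apply pow_le_pow_left₀ (by positivity) h2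
        calc c ^ 4 * μ ^ 2 / 256 = (c * Real.sqrt μ / 4) ^ 4 := by
              rw [show (c * Real.sqrt μ / 4) ^ 4 = c ^ 4 * (Real.sqrt μ) ^ 4 / 256 by ring]
              rw [show (Real.sqrt μ) ^ 4 = ((Real.sqrt μ) ^ 2) ^ 2 by ring,
                Real.sq_sqrt hμ0.le]
          _ ≤ _ := h3.trans_eq h1.symm
      have hexp : Real.exp (-c * Real.sqrt μ) = (Real.exp (c * Real.sqrt μ))⁻¹ := by
        rw [← Real.exp_neg]; ring_nf
      rw [hexp]
      have h256 : (0:ℝ) < c ^ 4 * μ ^ 2 / 256 := by positivity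
      have := inv_anti₀ h256 key
      calc (Real.exp (c * Real.sqrt μ))⁻¹ ≤ (c ^ 4 * μ ^ 2 / 256)⁻¹ := this
        _ = (256 / c ^ 4) * μ ^ (-2 : ℝ) := by
            rw [Real.rpow_neg hμ0.le, show (2:ℝ) = ((2:ℕ):ℝ) by norm_num, Real.rpow_natCast]
            field_simp
  have : IntegrableOn (fun μ : ℝ => Real.exp (-c * Real.sqrt μ))
      (Set.Ioc 0 1 ∪ Set.Ioi 1) := h01.union h1i
  refine this.mono_set ?_
  intro μ hμ
  rcases le_or_gt μ 1 with h | h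
  · exact Or.inl ⟨hμ, h⟩
  · exact Or.inr h

theorem cir_inverse_integral_expectation_finite
    (a b σ x : ℝ) (ha : 0 < a) (hb : 0 < b) (hσ : 0 < σ) (hx : 0 ≤ x) :
    IntegrableOn
      (fun μ : ℝ =>
        Real.exp (-a * (-(1 / σ) *
          ((b - Real.sqrt (b ^ 2 + 4 * σ * μ)) / 2 + Real.log 2 +
            Real.log (Real.sqrt (b ^ 2 + 4 * σ * μ) /
              ((Real.sqrt (b ^ 2 + 4 * σ * μ) - b) *
                  Real.exp (-Real.sqrt (b ^ 2 + 4 * σ * μ)) +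
                Real.sqrt (b ^ 2 + 4 * σ * μ) + b))))) *
        Real.exp (-x * (2 * μ * (1 - Real.exp (-Real.sqrt (b ^ 2 + 4 * σ * μ))) /
          ((Real.sqrt (b ^ 2 + 4 * σ * μ) - b) *
              Real.exp (-Real.sqrt (b ^ 2 + 4 * σ * μ)) +
            Real.sqrt (b ^ 2 + 4 * σ * μ) + b))))
      (Set.Ioi 0) := by
  set c : ℝ := a * Real.sqrt σ / σ with hc_def
  have hc : 0 < c := by positivity
  set C : ℝ := Real.exp (a / σ * Real.log 2 + a * b / (2 * σ)) with hC_def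
  have hg : IntegrableOn (fun μ : ℝ => C * Real.exp (-c * Real.sqrt μ)) (Set.Ioi 0) :=
    (integrableOn_exp_neg_mul_sqrt hc).const_mul C
  refine Integrable.mono' hg ?_ ?_
  · apply Measurable.aestronglyMeasurable
    have hD : Measurable fun μ : ℝ => Real.sqrt (b ^ 2 + 4 * σ * μ) :=
      Real.continuous_sqrt.measurable.comp
        (measurable_const.add (measurable_const.mul measurable_id))
    have hE : Measurable fun μ : ℝ =>
        (Real.sqrt (b ^ 2 + 4 * σ * μ) - b) * Real.exp (-Real.sqrt (b ^ 2 + 4 * σ * μ)) +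
          Real.sqrt (b ^ 2 + 4 * σ * μ) + b :=
      (((hD.sub measurable_const).mul (Real.measurable_exp.comp hD.neg)).add hD).add
        measurable_const
    exact (Real.measurable_exp.comp (measurable_const.mul (measurable_const.mul
        ((((measurable_const.sub hD).div_const 2).add measurable_const).add
          (Real.measurable_log.comp (hD.div hE)))))).mul
      (Real.measurable_exp.comp (measurable_const.mul
        (((measurable_const.mul measurable_id).mul
          (measurable_const.sub (Real.measurable_exp.comp hD.neg))).div hE)))
  · filter_upwards [ae_restrict_mem measurableSet_Ioi] with μ hμ
    have hμ0 : (0 : ℝ) < μ := hμ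
    set D : ℝ := Real.sqrt (b ^ 2 + 4 * σ * μ) with hD_def
    have hD0 : 0 < D := Real.sqrt_pos.mpr (by positivity)
    have hDb : b ≤ D := by
      rw [hD_def]
      calc b = Real.sqrt (b ^ 2) := by rw [Real.sqrt_sq hb.le]
        _ ≤ _ := Real.sqrt_le_sqrt (by nlinarith)
    have hDlb : 2 * Real.sqrt σ * Real.sqrt μ ≤ D := by
      rw [hD_def]
      calc 2 * Real.sqrt σ * Real.sqrt μ = Real.sqrt (4 * σ * μ) := by
            rw [show 4 * σ * μ = 4 * (σ * μ) by ring, Real.sqrt_mul (by norm_num),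
              Real.sqrt_mul hσ.le, show Real.sqrt 4 = 2 by
                rw [show (4:ℝ) = 2^2 by norm_num, Real.sqrt_sq (by norm_num)]]
            ring
        _ ≤ _ := Real.sqrt_le_sqrt (by nlinarith)
    set E : ℝ := (D - b) * Real.exp (-D) + D + b with hE_def
    have hE0 : 0 < E := by
      have : 0 ≤ (D - b) * Real.exp (-D) := mul_nonneg (by linarith) (Real.exp_pos _).le
      have : 0 < D + b := by linarith
      rw [hE_def]; nlinarith
    have hDE : D ≤ E := by
      have : 0 ≤ (D - b) * Real.exp (-D) := mul_nonneg (by linarith) (Real.exp_pos _).le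
      rw [hE_def]; linarith
    have hlog : Real.log (D / E) ≤ 0 :=
      Real.log_nonpos (by positivity) (div_le_one_of_le₀ hDE hE0.le)
    have hψ : 0 ≤ 2 * μ * (1 - Real.exp (-D)) / E := by
      have h1 : Real.exp (-D) ≤ 1 := Real.exp_le_one_iff.mpr (by linarith)
      have : 0 ≤ 2 * μ * (1 - Real.exp (-D)) := by nlinarith
      positivity
    rw [Real.norm_eq_abs, abs_of_pos (by positivity)]
    have hB : Real.exp (-x * (2 * μ * (1 - Real.exp (-D)) / E)) ≤ 1 := by
      apply Real.exp_le_one_iff.mpr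
      have : 0 ≤ x * (2 * μ * (1 - Real.exp (-D)) / E) := mul_nonneg hx hψ
      linarith
    have hA : Real.exp (-a * (-(1 / σ) * ((b - D) / 2 + Real.log 2 + Real.log (D / E)))) ≤
        C * Real.exp (-c * Real.sqrt μ) := by
      rw [hC_def, ← Real.exp_add]
      apply Real.exp_le_exp.mpr
      have h1 : -a * (-(1 / σ) * ((b - D) / 2 + Real.log 2 + Real.log (D / E)))
          = a / σ * ((b - D) / 2) + a / σ * Real.log 2 + a / σ * Real.log (D / E) := by
        field_simp
      have h2 : a / σ * Real.log (D / E) ≤ 0 :=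
        mul_nonpos_of_nonneg_of_nonpos (by positivity) hlog
      have h3 : a / σ * ((b - D) / 2) ≤ a * b / (2 * σ) + -c * Real.sqrt μ := by
        have haσ : 0 < a / σ := by positivity
        have h4 : a / σ * ((b - D) / 2) ≤ a / σ * ((b - 2 * Real.sqrt σ * Real.sqrt μ) / 2) := by
          apply mul_le_mul_of_nonneg_left _ haσ.le
          linarith
        have h5 : a / σ * ((b - 2 * Real.sqrt σ * Real.sqrt μ) / 2)
            = a * b / (2 * σ) + -c * Real.sqrt μ := by
          rw [hc_def]; field_simp; ring
        linarith
      rw [h1]; linarith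
    calc Real.exp (-a * (-(1 / σ) * ((b - D) / 2 + Real.log 2 + Real.log (D / E)))) *
          Real.exp (-x * (2 * μ * (1 - Real.exp (-D)) / E))
        ≤ Real.exp (-a * (-(1 / σ) * ((b - D) / 2 + Real.log 2 + Real.log (D / E)))) * 1 :=
          mul_le_mul_of_nonneg_left hB (Real.exp_pos _).le
      _ = _ := mul_one _
      _ ≤ C * Real.exp (-c * Real.sqrt μ) := hA
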